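/- Let k ≥ 2 and let H = (V, E) be a k-uniform 2-regular hypergraph on n vertices. Suppose W ⊆ V is a set of vertices such that no edge of H contains two distinct vertices of W. Then H has an independent set of size at least n + |W| − 2n/k; that is, α(H) ≥ n + |W| − 2n/k. -/

import Mathlib

/-- Let `k ≥ 2` and let `H = (V, E)` be a `k`-uniform `2`-regular
hypergraph on `n` vertices. Suppose `W ⊆ V` is such that no edge of `H` contains two
distinct vertices of `W`. Then `H` has an independent set of size at least
`n + |W| − 2n/k`. -/
theorem independence_lower_bound_of_two_regular {V : Type*} [Fintype V] [DecidableEq V]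
    (k : ℕ) (hk : 2 ≤ k) (E : Finset (Finset V))
    (huniform : ∀ e ∈ E, e.card = k)
    (hregular : ∀ v : V, (E.filter (fun e => v ∈ e)).card = 2)
    (W : Finset V)
    (hW : ∀ e ∈ E, ∀ v ∈ W, ∀ w ∈ W, v ∈ e → w ∈ e → v = w) :
    ∃ I : Finset V, (∀ e ∈ E, ¬ e ⊆ I) ∧
      (Fintype.card V : ℝ) + W.card - 2 * Fintype.card V / k ≤ I.card := by
  classical
  set n := Fintype.card V with hn
  -- double counting: k * |E| = 2 * n
  have key : ∀ s : Finset V, (∑ v : V, if v ∈ s then 1 else 0) = s.card := by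
    intro s
    simp [Finset.sum_ite_mem]
  have hcount : k * E.card = 2 * n := by
    have h1 : ∑ e ∈ E, e.card = k * E.card := by
      rw [Finset.sum_congr rfl huniform, Finset.sum_const, smul_eq_mul, mul_comm]
    have h2 : ∑ e ∈ E, e.card = ∑ v : V, (E.filter (fun e => v ∈ e)).card := by
      calc ∑ e ∈ E, e.card = ∑ e ∈ E, ∑ v : V, if v ∈ e then 1 else 0 :=
            Finset.sum_congr rfl (fun e _ => (key e).symm)
        _ = ∑ v : V, ∑ e ∈ E, if v ∈ e then 1 else 0 := Finset.sum_comm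
        _ = ∑ v : V, (E.filter (fun e => v ∈ e)).card :=
            Finset.sum_congr rfl (fun v _ => (Finset.card_filter _ _).symm)
    have h3 : ∑ v : V, (E.filter (fun e => v ∈ e)).card = 2 * n := by
      rw [Finset.sum_congr rfl (fun v _ => hregular v), Finset.sum_const, smul_eq_mul,
        mul_comm, Finset.card_univ]
    rw [← h1, h2, h3]
  -- edges meeting W
  set E2 : Finset (Finset V) := E.filter (fun e => ∃ w ∈ W, w ∈ e) with hE2
  set E1 : Finset (Finset V) := E.filter (fun e => ∀ w ∈ W, w ∉ e) with hE1
  have hE2card : E2.card = 2 * W.card := by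
    have : E2 = W.biUnion (fun w => E.filter (fun e => w ∈ e)) := by
      ext e
      simp only [hE2, Finset.mem_filter, Finset.mem_biUnion]
      constructor
      · rintro ⟨he, w, hw, hwe⟩; exact ⟨w, hw, he, hwe⟩
      · rintro ⟨w, hw, he, hwe⟩; exact ⟨he, w, hw, hwe⟩
    rw [this, Finset.card_biUnion]
    · rw [Finset.sum_congr rfl (fun w _ => hregular w), Finset.sum_const, smul_eq_mul,
        mul_comm]
    · intro x hx y hy hxy
      rw [Function.onFun, Finset.disjoint_left]
      intro e hex hey
      simp only [Finset.mem_filter] at hex hey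
      exact hxy (hW e hex.1 x hx y hy hex.2 hey.2)
  have hsplit : E1.card + E2.card = E.card := by
    have : E1 = E \ E2 := by
      ext e
      simp only [hE1, hE2, Finset.mem_filter, Finset.mem_sdiff]
      constructor
      · rintro ⟨he, h⟩; exact ⟨he, fun hx => by obtain ⟨w, hw, hwe⟩ := hx.2; exact h w hw hwe⟩
      · rintro ⟨he, h⟩; exact ⟨he, fun w hw hwe => h ⟨he, w, hw, hwe⟩⟩
    rw [this, Finset.card_sdiff_add_card_eq_card (Finset.filter_subset _ _)]
  -- choice function picking a vertex from each edge
  have hne : ∀ e ∈ E, e.Nonempty := fun e he => by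
    rw [← Finset.card_pos, huniform e he]; omega
  have hfe : ∀ e ∈ E1, ∃ v, v ∈ e := fun e he =>
    hne e (Finset.mem_filter.mp he).1
  set S2 : Finset V := E1.attach.image (fun e => (hfe e.1 e.2).choose) with hS2
  have hS2card : S2.card ≤ E1.card := by
    calc S2.card ≤ E1.attach.card := Finset.card_image_le
    _ = E1.card := Finset.card_attach
  set S : Finset V := W ∪ S2 with hS
  refine ⟨Finset.univ \ S, ?_, ?_⟩
  · intro e he hsub
    by_cases hmeet : ∃ w ∈ W, w ∈ e
    · obtain ⟨w, hw, hwe⟩ := hmeet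
      have := hsub hwe
      simp only [Finset.mem_sdiff, Finset.mem_univ, true_and, hS,
        Finset.mem_union] at this
      exact this (Or.inl hw)
    · have he1 : e ∈ E1 := by
        simp only [hE1, Finset.mem_filter]
        exact ⟨he, fun w hw hwe => hmeet ⟨w, hw, hwe⟩⟩
      have hv : (hfe e he1).choose ∈ e := (hfe e he1).choose_spec
      have hvS : (hfe e he1).choose ∈ S2 := by
        rw [hS2]
        exact Finset.mem_image.mpr ⟨⟨e, he1⟩, Finset.mem_attach _ _, rfl⟩
      have := hsub hv
      simp only [Finset.mem_sdiff, Finset.mem_univ, true_and, hS,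
        Finset.mem_union] at this
      exact this (Or.inr hvS)
  · -- cardinality bound
    have hScard : S.card + W.card ≤ E.card := by
      have h1 : S.card ≤ W.card + S2.card := Finset.card_union_le _ _
      omega
    have hIcard : (Finset.univ \ S).card = n - S.card := by
      rw [Finset.card_sdiff_of_subset (Finset.subset_univ S), Finset.card_univ]
    have hSn : S.card ≤ n := by
      have := Finset.card_le_card (Finset.subset_univ S)
      simpa [Finset.card_univ] using this
    have hkpos : (0 : ℝ) < k := by
      have : 0 < k := by omega
      exact_mod_cast this
    have hEreal : (E.card : ℝ) = 2 * n / k := by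
      field_simp
      exact_mod_cast (mul_comm k E.card ▸ hcount : E.card * k = 2 * n)
    have hIreal : ((Finset.univ \ S).card : ℝ) = n - S.card := by
      rw [hIcard, Nat.cast_sub hSn]
    rw [hIreal, ← hEreal]
    have : (S.card : ℝ) + W.card ≤ E.card := by exact_mod_cast hScard
    linarith
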